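/- For an integer n > 1 and a Boolean algebra B, the supremum of cardinalities of n-independent families in the weak product ∏^w_{i<ω} B equals the corresponding supremum for (∏^w_{i<ω} B) × (∏^w_{i<ω} B); i.e., ind_n(∏^w_{i<ω}B) = ind_n(∏^w_{i<ω}B × ∏^w_{i<ω}B). -/

import Mathlib

open Cardinal

/-- A set `Y` in a Boolean algebra is `m`-independent if every Boolean
combination of `m` distinct members of `Y` (with arbitrary complementation
pattern) is nonzero. -/
def NIndepSet {A : Type u} [BooleanAlgebra A] (m : ℕ) (Y : Set A) : Prop :=
  ∀ s t : Finset A, ↑s ⊆ Y → ↑t ⊆ Y → Disjoint s t → s.card + t.card = m →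
    (s.inf id) ⊓ (t.inf fun b => bᶜ) ≠ ⊥

/-- `ind_n` of a subalgebra `P` (given as a subset of an ambient Boolean
algebra): the supremum of the cardinalities of `n`-independent subsets of `P`. -/
noncomputable def indN {A : Type u} [BooleanAlgebra A] (m : ℕ) (P : Set A) :
    Cardinal.{u} :=
  sSup {c | ∃ Y : Set A, Y ⊆ P ∧ NIndepSet m Y ∧ #Y = c}

/-- The weak product `∏^w_{i<ω} B`: sequences in `B^ω` which are eventually
constantly `0` or eventually constantly `1`. -/
def weakProd (B : Type u) [BooleanAlgebra B] : Set (ℕ → B) :=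
  {f | ∃ N : ℕ, (∀ m ≥ N, f m = ⊥) ∨ (∀ m ≥ N, f m = ⊤)}

section Helpers

variable {A₁ : Type*} {A₂ : Type*} [BooleanAlgebra A₁] [BooleanAlgebra A₂]

lemma finset_inf_map {ι : Type*} (φ : A₁ → A₂) (htop : φ ⊤ = ⊤)
    (hinf : ∀ a b, φ (a ⊓ b) = φ a ⊓ φ b) (s : Finset ι) (g : ι → A₁) :
    φ (s.inf g) = s.inf (fun i => φ (g i)) := by
  induction s using Finset.cons_induction with
  | empty => simpa using htop
  | cons a s ha ih => simp [Finset.inf_cons, hinf, ih]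

lemma NIndepSet.mono {m : ℕ} {Y Z : Set A₁} (h : NIndepSet m Y) (hZ : Z ⊆ Y) :
    NIndepSet m Z := fun s t hs ht => h s t (hs.trans hZ) (ht.trans hZ)

lemma nindep_empty {m : ℕ} (hm : 0 < m) : NIndepSet m (∅ : Set A₁) := by
  intro s t hs ht _ hc
  have hs' : s = ∅ := by simpa using hs
  have ht' : t = ∅ := by simpa using ht
  subst hs'; subst ht'
  simp at hc
  omega

lemma transfer (n : ℕ) (Y : Set A₁) (φ : A₁ → A₂)
    (hinj : Set.InjOn φ Y)
    (htop : φ ⊤ = ⊤)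
    (hinf : ∀ a b, φ (a ⊓ b) = φ a ⊓ φ b)
    (hcompl : ∀ a, φ aᶜ = (φ a)ᶜ)
    (hbot : ∀ s t : Finset A₁, ↑s ⊆ Y → ↑t ⊆ Y →
      (s.inf id) ⊓ (t.inf fun b => bᶜ) ≠ ⊥ →
      φ ((s.inf id) ⊓ (t.inf fun b => bᶜ)) ≠ ⊥)
    (hY : NIndepSet n Y) : NIndepSet n (φ '' Y) := by
  classical
  intro s' t' hs' ht' hdisj hcard
  set ψ : A₂ → A₁ := fun a => if h : a ∈ φ '' Y then h.choose else ⊥ with hψdef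
  have hψ : ∀ a ∈ φ '' Y, ψ a ∈ Y ∧ φ (ψ a) = a := by
    intro a ha
    simp only [hψdef, dif_pos ha]
    exact ⟨ha.choose_spec.1, ha.choose_spec.2⟩
  set s : Finset A₁ := s'.image ψ with hsdef
  set t : Finset A₁ := t'.image ψ with htdef
  have hsY : ↑s ⊆ Y := by
    intro x hx
    simp only [hsdef, Finset.coe_image, Set.mem_image, Finset.mem_coe] at hx
    obtain ⟨a, ha, rfl⟩ := hx
    exact (hψ a (hs' ha)).1
  have htY : ↑t ⊆ Y := by
    intro x hx
    simp only [htdef, Finset.coe_image, Set.mem_image, Finset.mem_coe] at hx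
    obtain ⟨a, ha, rfl⟩ := hx
    exact (hψ a (ht' ha)).1
  have hsimg : s.image φ = s' := by
    have h1 : Finset.image (φ ∘ ψ) s' = Finset.image id s' :=
      Finset.image_congr (fun a ha => (hψ a (hs' ha)).2)
    rw [hsdef, Finset.image_image, h1, Finset.image_id]
  have htimg : t.image φ = t' := by
    have h1 : Finset.image (φ ∘ ψ) t' = Finset.image id t' :=
      Finset.image_congr (fun a ha => (hψ a (ht' ha)).2)
    rw [htdef, Finset.image_image, h1, Finset.image_id]
  have hscard : s.card = s'.card := by
    rw [hsdef]
    exact Finset.card_image_of_injOn (fun a ha b hb hab => by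
      rw [← (hψ a (hs' ha)).2, ← (hψ b (hs' hb)).2, hab])
  have htcard : t.card = t'.card := by
    rw [htdef]
    exact Finset.card_image_of_injOn (fun a ha b hb hab => by
      rw [← (hψ a (ht' ha)).2, ← (hψ b (ht' hb)).2, hab])
  have hdisj' : Disjoint s t := by
    rw [Finset.disjoint_left]
    intro x hx hxt
    simp only [hsdef, Finset.mem_image] at hx
    simp only [htdef, Finset.mem_image] at hxt
    obtain ⟨a, ha, rfl⟩ := hx
    obtain ⟨b, hb, hba⟩ := hxt
    have : b = a := by
      rw [← (hψ a (hs' ha)).2, ← (hψ b (ht' hb)).2, hba]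
    exact Finset.disjoint_left.1 hdisj ha (this ▸ hb)
  have e1 : s'.inf id = φ (s.inf id) := by
    rw [← hsimg, Finset.inf_image, finset_inf_map φ htop hinf]
    rfl
  have e2 : (t'.inf fun b => bᶜ) = φ (t.inf fun b => bᶜ) := by
    rw [← htimg, Finset.inf_image, finset_inf_map φ htop hinf]
    exact Finset.inf_congr rfl (fun a _ => (hcompl a).symm)
  rw [e1, e2, ← hinf]
  exact hbot s t hsY htY
    (hY s t hsY htY hdisj' (by rw [hscard, htcard]; exact hcard))

end Helpers

section Splice

variable {B : Type u} [BooleanAlgebra B]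

/-- The splice map: first `m+1` coordinates of the first factor, then all of
the second factor. -/
def splice (m : ℕ) (x : (ℕ → B) × (ℕ → B)) : ℕ → B :=
  fun i => if i ≤ m then x.1 i else x.2 (i - m - 1)

/-- The tail-stability condition. -/
def Cm (m : ℕ) (y : (ℕ → B) × (ℕ → B)) : Prop := ∀ k ≥ m, y.1 k = y.1 m

lemma splice_top (m : ℕ) : splice m (⊤ : (ℕ → B) × (ℕ → B)) = ⊤ := by
  funext i
  show (if i ≤ m then (⊤ : (ℕ → B) × (ℕ → B)).1 i
    else (⊤ : (ℕ → B) × (ℕ → B)).2 (i - m - 1)) = ⊤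
  by_cases h : i ≤ m
  · simp only [if_pos h]; rfl
  · simp only [if_neg h]; rfl

lemma splice_inf (m : ℕ) (x y : (ℕ → B) × (ℕ → B)) :
    splice m (x ⊓ y) = splice m x ⊓ splice m y := by
  funext i
  show splice m (x ⊓ y) i = splice m x i ⊓ splice m y i
  unfold splice
  by_cases h : i ≤ m
  · simp only [if_pos h]; rfl
  · simp only [if_neg h]; rfl

lemma splice_compl (m : ℕ) (x : (ℕ → B) × (ℕ → B)) :
    splice m xᶜ = (splice m x)ᶜ := by
  funext i
  show splice m xᶜ i = (splice m x i)ᶜ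
  unfold splice
  by_cases h : i ≤ m
  · simp only [if_pos h]; rfl
  · simp only [if_neg h]; rfl

lemma splice_injOn (m : ℕ) {Z : Set ((ℕ → B) × (ℕ → B))}
    (hZC : ∀ y ∈ Z, Cm m y) : Set.InjOn (splice m) Z := by
  intro x hx y hy hxy
  have h1 : ∀ i ≤ m, x.1 i = y.1 i := by
    intro i hi
    have := congrFun hxy i
    simpa only [splice, if_pos hi] using this
  have h2 : ∀ j, x.2 j = y.2 j := by
    intro j
    have := congrFun hxy (m + 1 + j)
    have hnot : ¬ (m + 1 + j ≤ m) := by omega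
    have hidx : m + 1 + j - m - 1 = j := by omega
    simpa only [splice, if_neg hnot, hidx] using this
  have hfst : x.1 = y.1 := by
    funext i
    rcases le_or_gt i m with hi | hi
    · exact h1 i hi
    · rw [hZC x hx i (le_of_lt hi), hZC y hy i (le_of_lt hi), h1 m le_rfl]
  exact Prod.ext hfst (funext h2)

lemma fst_coord_inf (i : ℕ) (s t : Finset ((ℕ → B) × (ℕ → B))) :
    ((s.inf id) ⊓ (t.inf fun b => bᶜ)).1 i
      = (s.inf fun y => y.1 i) ⊓ (t.inf fun y => (y.1 i)ᶜ) := by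
  have e1 : ((s.inf id).1 : ℕ → B) i = s.inf (fun y => y.1 i) := by
    have := finset_inf_map (fun x : (ℕ → B) × (ℕ → B) => x.1 i) rfl
      (fun a b => rfl) s id
    simpa using this
  have e2 : ((t.inf fun b => bᶜ).1 : ℕ → B) i = t.inf (fun y => (y.1 i)ᶜ) := by
    have := finset_inf_map (fun x : (ℕ → B) × (ℕ → B) => x.1 i) rfl
      (fun a b => rfl) t (fun b => bᶜ)
    simpa using this
  show (s.inf id).1 i ⊓ (t.inf fun b => bᶜ).1 i = _
  rw [e1, e2]

lemma splice_bot (m : ℕ) {Z : Set ((ℕ → B) × (ℕ → B))}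
    (hZC : ∀ y ∈ Z, Cm m y) (s t : Finset ((ℕ → B) × (ℕ → B)))
    (hs : ↑s ⊆ Z) (ht : ↑t ⊆ Z)
    (hsp : splice m ((s.inf id) ⊓ (t.inf fun b => bᶜ)) = ⊥) :
    ((s.inf id) ⊓ (t.inf fun b => bᶜ)) = ⊥ := by
  have hle : ∀ i ≤ m, ((s.inf id) ⊓ (t.inf fun b => bᶜ)).1 i = ⊥ := by
    intro i hi
    have := congrFun hsp i
    simpa only [splice, if_pos hi, Pi.bot_apply] using this
  have hkey : ∀ i, m ≤ i →
      ((s.inf id) ⊓ (t.inf fun b => bᶜ)).1 i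
        = ((s.inf id) ⊓ (t.inf fun b => bᶜ)).1 m := by
    intro i hi
    have c1 : (s.inf fun y => y.1 i) = s.inf fun y => y.1 m :=
      Finset.inf_congr rfl (fun y hy => hZC y (hs hy) i hi)
    have c2 : (t.inf fun y => (y.1 i)ᶜ) = t.inf fun y => (y.1 m)ᶜ :=
      Finset.inf_congr rfl (fun y hy => by rw [hZC y (ht hy) i hi])
    rw [fst_coord_inf, fst_coord_inf, c1, c2]
  have hfst : ((s.inf id) ⊓ (t.inf fun b => bᶜ)).1 = ⊥ := by
    funext i
    rcases le_or_gt i m with hi | hi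
    · exact hle i hi
    · rw [hkey i (le_of_lt hi), hle m le_rfl]; rfl
  have hsnd : ((s.inf id) ⊓ (t.inf fun b => bᶜ)).2 = ⊥ := by
    funext j
    have := congrFun hsp (m + 1 + j)
    have hnot : ¬ (m + 1 + j ≤ m) := by omega
    have hidx : m + 1 + j - m - 1 = j := by omega
    simpa only [splice, if_neg hnot, hidx, Pi.bot_apply] using this
  exact Prod.ext hfst hsnd

lemma splice_mem_weakProd (m : ℕ) (y : (ℕ → B) × (ℕ → B))
    (hy : y.2 ∈ weakProd B) : splice m y ∈ weakProd B := by
  obtain ⟨N, hN⟩ := hy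
  refine ⟨m + 1 + N, ?_⟩
  refine hN.imp (fun h k hk => ?_) (fun h k hk => ?_) <;>
  · have hnot : ¬ (k ≤ m) := by omega
    simp only [splice, if_neg hnot]
    exact h _ (by omega)

/-- Key piece lemma: a tail-stable independent family in the product pushes
into the weak product. -/
lemma piece_le {n m : ℕ} (Z : Set ((ℕ → B) × (ℕ → B)))
    (hZP : ∀ y ∈ Z, y.2 ∈ weakProd B)
    (hZC : ∀ y ∈ Z, Cm m y) (hZind : NIndepSet n Z) :
    ∃ Y' : Set (ℕ → B), Y' ⊆ weakProd B ∧ NIndepSet n Y' ∧ #Y' = #Z := by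
  refine ⟨splice m '' Z, ?_, ?_, mk_image_eq_of_injOn _ _ (splice_injOn m hZC)⟩
  · rintro z ⟨y, hy, rfl⟩
    exact splice_mem_weakProd m y (hZP y hy)
  · refine transfer n Z (splice m) (splice_injOn m hZC) (splice_top m)
      (splice_inf m) (splice_compl m) ?_ hZind
    intro s t hs ht hne hsp
    exact hne (splice_bot m hZC s t hs ht hsp)

/-- Every finite set of pairs with eventually-constant first coordinate admits
a uniform stability point. -/
lemma exists_uniform (Y₀ : Finset ((ℕ → B) × (ℕ → B)))
    (h : ∀ y ∈ Y₀, y.1 ∈ weakProd B) : ∃ m, ∀ y ∈ Y₀, Cm m y := by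
  induction Y₀ using Finset.cons_induction with
  | empty => exact ⟨0, by simp⟩
  | cons a s ha ih =>
    obtain ⟨m₁, hm₁⟩ := ih (fun y hy => h y (Finset.mem_cons_of_mem hy))
    obtain ⟨N, hN⟩ := h a (Finset.mem_cons_self a s)
    refine ⟨max m₁ N, ?_⟩
    intro y hy
    rcases Finset.mem_cons.1 hy with rfl | hy'
    · intro k hk
      rcases hN with hN | hN
      · rw [hN k (le_trans (le_max_right _ _) hk), hN (max m₁ N) (le_max_right _ _)]
      · rw [hN k (le_trans (le_max_right _ _) hk), hN (max m₁ N) (le_max_right _ _)]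
    · intro k hk
      rw [hm₁ y hy' k (le_trans (le_max_left _ _) hk),
        hm₁ y hy' (max m₁ N) (le_max_left _ _)]

lemma mem_Cm_of_mem_weakProd (y : (ℕ → B) × (ℕ → B)) (hy : y.1 ∈ weakProd B) :
    ∃ m, Cm m y := by
  obtain ⟨N, hN⟩ := hy
  refine ⟨N, ?_⟩
  intro k hk
  rcases hN with hN | hN
  · rw [hN k hk, hN N le_rfl]
  · rw [hN k hk, hN N le_rfl]

end Splice

/-- For `n > 1`, `ind_n(∏^w_{i<ω} B) = ind_n(∏^w_{i<ω} B × ∏^w_{i<ω} B)`. -/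
theorem stmt14 {B : Type u} [BooleanAlgebra B] (n : ℕ) (hn : 1 < n) :
    indN n (weakProd B) =
      indN n ((weakProd B) ×ˢ (weakProd B) : Set ((ℕ → B) × (ℕ → B))) := by
  classical
  set S₁ : Set Cardinal.{u} :=
    {c | ∃ Y : Set (ℕ → B), Y ⊆ weakProd B ∧ NIndepSet n Y ∧ #Y = c} with hS₁
  set S₂ : Set Cardinal.{u} :=
    {c | ∃ Y : Set ((ℕ → B) × (ℕ → B)),
      Y ⊆ ((weakProd B) ×ˢ (weakProd B) : Set ((ℕ → B) × (ℕ → B))) ∧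
        NIndepSet n Y ∧ #Y = c} with hS₂
  have hbdd₁ : BddAbove S₁ := by
    refine ⟨#(ℕ → B), ?_⟩
    rintro c ⟨Y, _, _, rfl⟩
    exact mk_set_le Y
  have hbdd₂ : BddAbove S₂ := by
    refine ⟨#((ℕ → B) × (ℕ → B)), ?_⟩
    rintro c ⟨Y, _, _, rfl⟩
    exact mk_set_le Y
  have hne₁ : S₁.Nonempty :=
    ⟨0, ∅, Set.empty_subset _, nindep_empty (by omega), by simp⟩
  have hne₂ : S₂.Nonempty :=
    ⟨0, ∅, Set.empty_subset _, nindep_empty (by omega), by simp⟩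
  show sSup S₁ = sSup S₂
  apply le_antisymm
  · refine csSup_le hne₁ ?_
    rintro c ⟨Y, hYw, hYind, rfl⟩
    refine le_csSup hbdd₂ ?_
    have hinj : Set.InjOn (fun a : ℕ → B => (a, a)) Y :=
      fun a _ b _ hab => congrArg Prod.fst hab
    refine ⟨(fun a : ℕ → B => (a, a)) '' Y, ?_, ?_,
      mk_image_eq_of_injOn _ _ hinj⟩
    · rintro z ⟨a, ha, rfl⟩
      exact ⟨hYw ha, hYw ha⟩
    · refine transfer n Y _ hinj rfl (fun a b => rfl) (fun a => rfl) ?_ hYind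
      intro s t _ _ hne h
      exact hne (congrArg Prod.fst h)
  · refine csSup_le hne₂ ?_
    rintro c ⟨Y, hYP, hYind, rfl⟩
    have key : ∀ (Z : Set ((ℕ → B) × (ℕ → B))), Z ⊆ Y → (∃ m, ∀ y ∈ Z, Cm m y) →
        #Z ≤ sSup S₁ := by
      rintro Z hZY ⟨m, hZC⟩
      obtain ⟨Y', hY'w, hY'ind, hY'card⟩ :=
        piece_le (n := n) Z (fun y hy => (hYP (hZY hy)).2) hZC (hYind.mono hZY)
      calc #Z = #Y' := hY'card.symm
        _ ≤ sSup S₁ := le_csSup hbdd₁ ⟨Y', hY'w, hY'ind, rfl⟩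
    by_cases hfin : Y.Finite
    · obtain ⟨m, hm⟩ := exists_uniform hfin.toFinset
        (fun y hy => (hYP (hfin.mem_toFinset.1 hy)).1)
      exact key Y le_rfl ⟨m, fun y hy => hm y (hfin.mem_toFinset.2 hy)⟩
    · have hinf : Y.Infinite := hfin
      have haleph : ℵ₀ ≤ sSup S₁ := by
        rw [aleph0_le]
        intro k
        obtain ⟨t, htY, htcard⟩ := hinf.exists_subset_card_eq k
        obtain ⟨m, hm⟩ := exists_uniform t (fun y hy => (hYP (htY hy)).1)
        have hcardeq : #(↑t : Set ((ℕ → B) × (ℕ → B))) = (t.card : Cardinal) :=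
          mk_coe_finset
        calc (k : Cardinal) = #(↑t : Set ((ℕ → B) × (ℕ → B))) := by
              rw [hcardeq, htcard]
          _ ≤ sSup S₁ := key ↑t htY ⟨m, fun y hy => hm y (by simpa using hy)⟩
      set piece : ULift.{u} ℕ → Set ((ℕ → B) × (ℕ → B)) :=
        fun m => {y ∈ Y | Cm m.down y} with hpiece
      have hYeq : Y = ⋃ m, piece m := by
        ext y
        constructor
        · intro hy
          obtain ⟨m, hm⟩ := mem_Cm_of_mem_weakProd y (hYP hy).1
          exact Set.mem_iUnion.2 ⟨⟨m⟩, hy, hm⟩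
        · intro hy
          obtain ⟨m, hm⟩ := Set.mem_iUnion.1 hy
          exact hm.1
      calc #Y = #(⋃ m, piece m) := by rw [← hYeq]
        _ ≤ #(ULift.{u} ℕ) * ⨆ m, #(piece m) := mk_iUnion_le _
        _ ≤ ℵ₀ * sSup S₁ := by
            rw [mk_eq_aleph0]
            exact mul_le_mul' le_rfl (ciSup_le fun m =>
              key (piece m) (fun y hy => hy.1) ⟨m.down, fun y hy => hy.2⟩)
        _ = sSup S₁ := by
            rw [mul_eq_max le_rfl haleph, max_eq_right haleph]
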